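/- Let κ be an infinite cardinal and let λ be an infinite cardinal with cf(κ) ≤ λ < κ. Then for every family D of at most κ many subsets of κ, each of cardinality λ, there exists a subset X of κ of cardinality λ that is not contained in any member of D; that is, cf⟨[κ]^λ, ⊆⟩ > κ. -/

import Mathlib

universe u

open Cardinal

/-- If `κ` is infinite, `λ` is infinite and `cf(κ) ≤ λ < κ`, then any family of at most
`κ` many subsets of `κ`, each of cardinality `λ`, fails to be cofinal in `[κ]^λ`:
some `X ∈ [κ]^λ` is contained in no member of the family.  Hence `cf⟨[κ]^λ, ⊆⟩ > κ`. -/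
theorem stmt3 (κ lam : Cardinal.{u}) (hκ : ℵ₀ ≤ κ) (hlam : ℵ₀ ≤ lam)
    (hcf : κ.ord.cof ≤ lam) (hlt : lam < κ)
    (D : Set (Set κ.out)) (hD : #D ≤ κ) (hDcard : ∀ Y ∈ D, #Y = lam) :
    ∃ X : Set κ.out, #X = lam ∧ ∀ Y ∈ D, ¬ X ⊆ Y := by
  have hmkout : #κ.out = κ := Cardinal.mk_out κ
  -- a set of size `lam` inside `κ.out`
  obtain ⟨S', hS'⟩ := Cardinal.le_mk_iff_exists_set.mp
    (show lam ≤ #κ.out by rw [hmkout]; exact hlt.le)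
  rcases Set.eq_empty_or_nonempty D with hDe | hDne
  · exact ⟨S', hS', by simp [hDe]⟩
  -- enumerate `D` by a surjection from `κ.out`
  haveI : Nonempty D := hDne.to_subtype
  obtain ⟨g⟩ := (Cardinal.le_def _ _).mp (show #D ≤ #κ.out by rw [hmkout]; exact hD)
  set f : κ.out → D := Function.invFun g with hf
  have hfsurj : Function.Surjective f := Function.invFun_surjective g.injective
  -- a well order of type `κ.ord` on `κ.out`
  obtain ⟨r, wo, hr⟩ := Cardinal.ord_eq κ.out
  haveI := wo
  rw [hmkout] at hr
  -- an unbounded set `S` of size `≤ lam`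
  obtain ⟨S, hSub, hScard⟩ : ∃ S : Set κ.out, (∀ a, ∃ b ∈ S, ¬ r b a) ∧
      Cardinal.mk S = Ordinal.cof (Ordinal.type r) := by
    classical
    letI := linearOrderOfSTO r
    haveI : WellFoundedLT κ.out := wo.toIsWellFounded
    obtain ⟨s, hs, hs'⟩ := Order.exists_cof_eq κ.out
    refine ⟨s, fun a => ?_, ?_⟩
    · obtain ⟨b, hb, hab⟩ := hs a
      exact ⟨b, hb, not_lt.mpr hab⟩
    · rw [hs', ← Ordinal.cof_type]; rfl
  have hSlam : #S ≤ lam := by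
    rw [hScard, ← hr]; exact hcf
  -- the "diagonal" unions
  set B : κ.out → Set κ.out := fun s => ⋃ a ∈ {a | ¬ r s a}, (f a : Set κ.out) with hB
  have hBlt : ∀ s, #(B s) < κ := by
    intro s
    have hA : #({a | ¬ r s a} : Set κ.out) < κ := by
      have hsub : ({a | ¬ r s a} : Set κ.out) ⊆ insert s {a | r a s} := by
        intro a ha
        rcases trichotomous_of r s a with h1 | h2 | h3
        · exact absurd h1 ha
        · exact Or.inl h2.symm
        · exact Or.inr h3
      have h1 : #({a | r a s} : Set κ.out) < κ := by
        have heq : #({a | r a s} : Set κ.out) = (Ordinal.typein r s).card := by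
          exact (Ordinal.card_typein (r := r) s).symm
        rw [heq]
        exact Cardinal.lt_ord.mp (by rw [hr]; exact Ordinal.typein_lt_type r s)
      calc #({a | ¬ r s a} : Set κ.out) ≤ #(insert s {a | r a s} : Set κ.out) :=
            Cardinal.mk_le_mk_of_subset hsub
        _ ≤ #({a | r a s} : Set κ.out) + 1 := Cardinal.mk_insert_le
        _ < κ := Cardinal.add_lt_of_lt hκ h1 (lt_of_lt_of_le Cardinal.one_lt_aleph0 hκ)
    have h2 : #(B s) ≤ #({a | ¬ r s a} : Set κ.out) *
        ⨆ a : ({a | ¬ r s a} : Set κ.out), #((fun b => (f b : Set κ.out)) (a : κ.out)) :=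
      Cardinal.mk_biUnion_le (fun b => (f b : Set κ.out)) {a | ¬ r s a}
    have hsup : (⨆ a : ({a | ¬ r s a} : Set κ.out),
        #((fun b => (f b : Set κ.out)) (a : κ.out))) ≤ lam :=
      ciSup_le' fun a => le_of_eq (hDcard _ (f a.1).2)
    calc #(B s) ≤ _ := h2
      _ ≤ #({a | ¬ r s a} : Set κ.out) * lam := mul_le_mul_right hsup _
      _ < κ := Cardinal.mul_lt_of_lt hκ hA hlt
  -- choose points outside them
  have hx : ∀ s, ∃ x, x ∉ B s := by
    intro s
    by_contra h
    push_neg at h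
    have : #κ.out ≤ #(B s) := by
      have : (Set.univ : Set κ.out) ⊆ B s := fun a _ => h a
      calc #κ.out = #(Set.univ : Set κ.out) := Cardinal.mk_univ.symm
        _ ≤ #(B s) := Cardinal.mk_le_mk_of_subset this
    rw [hmkout] at this
    exact absurd this (not_le.mpr (hBlt s))
  choose x hxB using hx
  refine ⟨(x '' S) ∪ S', ?_, ?_⟩
  · apply le_antisymm
    · calc #((x '' S ∪ S' : Set κ.out)) ≤ #(x '' S) + #S' := Cardinal.mk_union_le _ _
        _ ≤ lam + lam := by
            apply add_le_add
            · exact le_trans (Cardinal.mk_image_le) hSlam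
            · exact le_of_eq hS'
        _ = lam := Cardinal.add_eq_self hlam
    · rw [← hS']
      exact Cardinal.mk_le_mk_of_subset Set.subset_union_right
  · intro Y hY hsubY
    obtain ⟨a, ha⟩ := hfsurj ⟨Y, hY⟩
    obtain ⟨s, hsS, hsr⟩ := hSub a
    have hxs : x s ∉ Y := by
      intro hmem
      apply hxB s
      apply Set.mem_biUnion (show a ∈ {a | ¬ r s a} from hsr)
      rw [ha]; exact hmem
    exact hxs (hsubY (Or.inl ⟨s, hsS, rfl⟩))
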